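/- Let S be a finite semilattice indecomposable semigroup with zero z. Let S' be the semigroup obtained from S by adjoining a new element z' with z'x = xz' = z for all x ∈ S and (z')² = z. Then S' is a semilattice indecomposable semigroup with |S'| = |S| + 1. -/
import Mathlib


universe u

/-- A semigroup is semilattice indecomposable if every semigroup homomorphism from it to a
semilattice (a commutative idempotent semigroup) is constant. -/
def SemilatticeIndecomposable (S : Type u) [Semigroup S] : Prop :=
  ∀ (T : Type u) [Semigroup T],
    (∀ a b : T, a * b = b * a) → (∀ a : T, a * a = a) →
      ∀ f : S →ₙ* T, ∀ x y : S, f x = f y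

section Adjoin

variable {S : Type u} [Semigroup S]

/-- Multiplication on `S' = S ∪ {z'}` (with `z'` represented by `none`):
it extends the multiplication of `S`, and `z' x = x z' = z` for all `x ∈ S`
as well as `z'² = z`. -/
def adjMul (z : S) : Option S → Option S → Option S
  | some a, some b => some (a * b)
  | _, _ => some z

theorem adjMul_assoc (z : S) (hz : ∀ x : S, z * x = z ∧ x * z = z)
    (x y w : Option S) : adjMul z (adjMul z x y) w = adjMul z x (adjMul z y w) := by
  rcases x with _ | a <;> rcases y with _ | b <;> rcases w with _ | c <;>
    simp [adjMul, (hz _).1, (hz _).2, mul_assoc]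

/-- `S' = S ∪ {z'}` is a semigroup when `z` is a zero of `S`. -/
def adjSemigroup (z : S) (hz : ∀ x : S, z * x = z ∧ x * z = z) :
    Semigroup (Option S) where
  mul := adjMul z
  mul_assoc := adjMul_assoc z hz

end Adjoin

/-- If `S` is a finite semilattice indecomposable semigroup with zero `z`, then the semigroup
`S'` obtained by adjoining a new element `z'` with `z'x = xz' = (z')² = z` is a semilattice
indecomposable semigroup with `|S'| = |S| + 1`. -/
theorem stmt_13 {S : Type u} [Semigroup S] [Fintype S]
    (hS : SemilatticeIndecomposable S)
    (z : S) (hz : ∀ x : S, z * x = z ∧ x * z = z) :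
    @SemilatticeIndecomposable (Option S) (adjSemigroup z hz) ∧
      Fintype.card (Option S) = Fintype.card S + 1 := by
  letI : Semigroup (Option S) := adjSemigroup z hz
  constructor
  · intro T _ hcomm hidem f x y
    have hmul : ∀ a b : S, (some a : Option S) * some b = some (a * b) := fun _ _ => rfl
    let g : S →ₙ* T :=
      { toFun := fun s => f (some s)
        map_mul' := fun a b => by show f (some (a * b)) = f (some a) * f (some b); rw [← hmul a b, map_mul] }
    have hg : ∀ a b : S, f (some a) = f (some b) := hS T hcomm hidem g
    have hnone : f (none : Option S) = f (some z) := by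
      have h1 : (none : Option S) * none = some z := rfl
      have := map_mul f (none : Option S) none
      rw [h1, hidem] at this
      exact this.symm
    rcases x with _ | a <;> rcases y with _ | b
    · rfl
    · rw [hnone]; exact hg z b
    · rw [hnone]; exact (hg a z)
    · exact hg a b
  · simp
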